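/- Let (V, E⁺, E⁻) be a complete signed graph that admits a feasible line embedding. Then the positive part G⁺ = (V, E⁺) is a chordal graph: every cycle in G⁺ of length at least 4 has a chord. -/

import Mathlib

/-- π is a feasible line embedding of the signed graph (V, Ep, En). -/
def Feasible {V : Type} (Ep En : V → V → Prop) (π : V → ℕ) : Prop :=
  Function.Injective π ∧
  (∀ u u₁ u₂ : V, π u₁ < π u₂ → π u₂ < π u → Ep u₁ u → ¬ En u₂ u) ∧
  (∀ u u₁ u₂ : V, π u < π u₂ → π u₂ < π u₁ → Ep u₁ u → ¬ En u₂ u)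

/-- If a complete signed graph admits a feasible line embedding, then its
positive part is chordal: every cycle of length at least 4 (given as a list of
pairwise distinct vertices, consecutive ones adjacent, and the last adjacent to
the first) has a chord, i.e. a positive edge between two non-consecutive
vertices of the cycle. -/
theorem complete_embeddable_positive_part_chordal
    {V : Type} [Fintype V] (Ep En : V → V → Prop)
    (hsymp : ∀ u v, Ep u v → Ep v u) (hsymn : ∀ u v, En u v → En v u)
    (hirrp : ∀ v, ¬ Ep v v) (hirrn : ∀ v, ¬ En v v)
    (hdisj : ∀ u v, ¬ (Ep u v ∧ En u v))
    (hcomplete : ∀ u v : V, u ≠ v → Ep u v ∨ En u v)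
    (π : V → ℕ) (hfeas : Feasible Ep En π) :
    ∀ (c : List V), c.Nodup → 4 ≤ c.length →
      List.Chain' Ep c →
      (∀ (h : c ≠ []), Ep (c.getLast h) (c.head h)) →
      ∃ i j : Fin c.length, i < j ∧ (j : ℕ) ≠ (i : ℕ) + 1 ∧
        ¬ ((i : ℕ) = 0 ∧ (j : ℕ) = c.length - 1) ∧
        Ep (c.get i) (c.get j) := by
  obtain ⟨hinj, hA, _hB⟩ := hfeas
  have key : ∀ v a b : V, π v < π a → π v < π b → Ep v a → Ep v b → a ≠ b → Ep a b := by
    intro v a b hva hvb hEa hEb hab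
    rcases lt_trichotomy (π a) (π b) with h | h | h
    · exact (hcomplete a b hab).resolve_right (hA b v a hva h hEb)
    · exact absurd (hinj h) hab
    · exact hsymp _ _ ((hcomplete b a (Ne.symm hab)).resolve_right (hA a v b hvb h hEa))
  intro c hnodup hlen hchain hclose
  have hne : c ≠ [] := by intro h; simp [h] at hlen
  have hcons : ∀ (i : ℕ) (h : i < c.length - 1),
      Ep (c.get ⟨i, by omega⟩) (c.get ⟨i + 1, by omega⟩) :=
    fun i h => List.isChain_iff_getElem.mp hchain i (by omega)
  have hlastE : Ep (c.get ⟨c.length - 1, by omega⟩) (c.get ⟨0, by omega⟩) := by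
    have h := hclose hne
    rw [List.getLast_eq_getElem, List.head_eq_getElem] at h; exact h
  obtain ⟨k, -, hk⟩ := Finset.exists_min_image (Finset.univ : Finset (Fin c.length))
    (fun i => π (c.get i)) ⟨⟨0, by omega⟩, Finset.mem_univ _⟩
  have hget_ne : ∀ i j : Fin c.length, i ≠ j → c.get i ≠ c.get j := by
    intro i j hij h
    exact hij (hnodup.get_inj_iff.mp h)
  have hklt : ∀ i : Fin c.length, i ≠ k → π (c.get k) < π (c.get i) := by
    intro i hik
    have h1 := hk i (Finset.mem_univ _)
    have hne' : π (c.get k) ≠ π (c.get i) := fun h =>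
      hget_ne _ _ (Ne.symm hik) (hinj h)
    omega
  rcases Nat.lt_trichotomy (k : ℕ) 0 with hk0 | hk0 | hk0
  · omega
  · -- k = 0 : chord between indices 1 and c.length - 1
    refine ⟨⟨1, by omega⟩, ⟨c.length - 1, by omega⟩, Fin.mk_lt_mk.mpr (by omega),
      by simp only [Fin.val_mk]; omega, by simp only [Fin.val_mk]; omega, ?_⟩
    have h1 : (⟨1, by omega⟩ : Fin c.length) ≠ k :=
      Fin.ne_of_val_ne (by simp only [Fin.val_mk]; omega)
    have h2 : (⟨c.length - 1, by omega⟩ : Fin c.length) ≠ k :=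
      Fin.ne_of_val_ne (by simp only [Fin.val_mk]; omega)
    have hkeq : k = ⟨0, by omega⟩ := Fin.ext (by simp only [Fin.val_mk]; omega)
    refine key (c.get k) _ _ (hklt _ h1) (hklt _ h2) ?_ ?_
      (hget_ne _ _ (Fin.ne_of_val_ne (by simp only [Fin.val_mk]; omega)))
    · rw [hkeq]; exact hcons 0 (by omega)
    · rw [hkeq]; exact hsymp _ _ hlastE
  · rcases Nat.lt_trichotomy (k : ℕ) (c.length - 1) with hk1 | hk1 | hk1
    · -- middle: chord between k-1 and k+1
      refine ⟨⟨(k : ℕ) - 1, by omega⟩, ⟨(k : ℕ) + 1, by omega⟩,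
        Fin.mk_lt_mk.mpr (by omega), by simp only [Fin.val_mk]; omega,
        by simp only [Fin.val_mk]; omega, ?_⟩
      have h1 : (⟨(k : ℕ) - 1, by omega⟩ : Fin c.length) ≠ k :=
        Fin.ne_of_val_ne (by simp only [Fin.val_mk]; omega)
      have h2 : (⟨(k : ℕ) + 1, by omega⟩ : Fin c.length) ≠ k :=
        Fin.ne_of_val_ne (by simp only [Fin.val_mk]; omega)
      refine key (c.get k) _ _ (hklt _ h1) (hklt _ h2) ?_ ?_
        (hget_ne _ _ (Fin.ne_of_val_ne (by simp only [Fin.val_mk]; omega)))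
      · have h3 := hcons ((k : ℕ) - 1) (by omega)
        have hkeq : (⟨(k : ℕ) - 1 + 1, by omega⟩ : Fin c.length) = k :=
          Fin.ext (by simp only [Fin.val_mk]; omega)
        rw [hkeq] at h3
        exact hsymp _ _ h3
      · have h3 := hcons (k : ℕ) (by omega)
        have hkeq : (⟨(k : ℕ), by omega⟩ : Fin c.length) = k :=
          Fin.ext (by simp only [Fin.val_mk])
        rwa [hkeq] at h3
    · -- k = c.length - 1 : chord between 0 and c.length - 2
      refine ⟨⟨0, by omega⟩, ⟨c.length - 2, by omega⟩, Fin.mk_lt_mk.mpr (by omega),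
        by simp only [Fin.val_mk]; omega, by simp only [Fin.val_mk]; omega, ?_⟩
      have h1 : (⟨0, by omega⟩ : Fin c.length) ≠ k :=
        Fin.ne_of_val_ne (by simp only [Fin.val_mk]; omega)
      have h2 : (⟨c.length - 2, by omega⟩ : Fin c.length) ≠ k :=
        Fin.ne_of_val_ne (by simp only [Fin.val_mk]; omega)
      have hkeq : k = ⟨c.length - 1, by omega⟩ :=
        Fin.ext (by simp only [Fin.val_mk]; omega)
      refine key (c.get k) _ _ (hklt _ h1) (hklt _ h2) ?_ ?_
        (hget_ne _ _ (Fin.ne_of_val_ne (by simp only [Fin.val_mk]; omega)))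
      · rw [hkeq]; exact hlastE
      · have h3 := hcons (c.length - 2) (by omega)
        have heq : (⟨c.length - 2 + 1, by omega⟩ : Fin c.length)
            = ⟨c.length - 1, by omega⟩ := Fin.ext (by simp only [Fin.val_mk]; omega)
        rw [heq] at h3
        rw [hkeq]
        exact hsymp _ _ h3
    · have h4 := k.isLt; omega
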